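/- Assume the two refactorization identities B̲₂(z)·B̲₁(z) = B₁(z)·B₂(z) and B₂(z)·B₁(z) = B̃₁(z)·B̃₂(z) hold for all z ∉ {z₁, z₂}, and that the scalars q₂†·p₁, q₂†·A⁻¹·p̲₁, q₂†·A⁻²·p₁ and q̲₂†·A⁻¹·p₁ are nonzero. Then there exist nonzero complex scalars c and c' such that c • p̃₁ = A · ((z₁−z₂)·(q₂†·p₁)⁻¹ • p₁ + (z₂−ζ₁)·(q₂†·A⁻¹·p̲₁)⁻¹ • (A⁻¹·p̲₁) + (ζ₁−ζ₂)·(q₂†·A⁻²·p₁)⁻¹ • (A⁻²·p₁)) and c' • q̃₂† = ((z₂−z₁)·(q₂†·p₁)⁻¹ • q₂† + (z₁−ζ₂)·(q̲₂†·A⁻¹·p₁)⁻¹ • (q̲₂†·A⁻¹) + (ζ₂−ζ₁)·(q₂†·A⁻²·p₁)⁻¹ • (q₂†·A⁻²)) · A. (These are the explicit equations of motion of the isospectral discrete dynamical system.) -/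

import Mathlib

open Matrix

namespace IsoAux
variable {n m k l : ℕ}

lemma mul11_col (p : Matrix (Fin n) (Fin 1) ℂ) (x : Matrix (Fin 1) (Fin 1) ℂ) :
    p * x = x 0 0 • p := by
  ext i j
  have hj : j = 0 := Subsingleton.elim _ _
  subst hj
  simp [Matrix.mul_apply, Fin.sum_univ_one, mul_comm]

lemma mul11_row (x : Matrix (Fin 1) (Fin 1) ℂ) (q : Matrix (Fin 1) (Fin n) ℂ) :
    x * q = x 0 0 • q := by
  ext i j
  have hi : i = 0 := Subsingleton.elim _ _
  subst hi
  simp [Matrix.mul_apply, Fin.sum_univ_one]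

lemma trace11 (p : Matrix (Fin n) (Fin 1) ℂ) (q : Matrix (Fin 1) (Fin n) ℂ)
    (M : Matrix (Fin n) (Fin n) ℂ) : (p * q * M).trace = (q * M * p) 0 0 := by
  rw [Matrix.mul_assoc, Matrix.trace_mul_comm]
  simp [Matrix.trace, Matrix.diag, Fin.sum_univ_one, Matrix.mul_assoc]

/-- `(p q)(p' q') = (q p')₀₀ • (p q')`. -/
lemma quad' (p : Matrix (Fin n) (Fin 1) ℂ) (q : Matrix (Fin 1) (Fin m) ℂ)
    (p' : Matrix (Fin m) (Fin 1) ℂ) (q' : Matrix (Fin 1) (Fin k) ℂ) :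
    (p * q) * (p' * q') = ((q * p') 0 0) • (p * q') := by
  have h : (p * q) * (p' * q') = p * ((q * p') * q') := by
    simp only [Matrix.mul_assoc]
  rw [h, mul11_row, Matrix.mul_smul]

lemma pair_col (p : Matrix (Fin n) (Fin 1) ℂ) (q : Matrix (Fin 1) (Fin m) ℂ)
    (p' : Matrix (Fin m) (Fin 1) ℂ) :
    (p * q) * p' = ((q * p') 0 0) • p := by
  rw [Matrix.mul_assoc, mul11_col]

lemma pair_row (q : Matrix (Fin 1) (Fin n) ℂ) (p' : Matrix (Fin n) (Fin 1) ℂ)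
    (q' : Matrix (Fin 1) (Fin m) ℂ) :
    q * (p' * q') = ((q * p') 0 0) • q' := by
  rw [← Matrix.mul_assoc, mul11_row]

lemma two_pt (S : Set ℂ) (hS : S.Finite) (P Q : Matrix (Fin n) (Fin m) ℂ)
    (h : ∀ z ∉ S, z • P + Q = 0) : P = 0 ∧ Q = 0 := by
  obtain ⟨u, hu⟩ := hS.infinite_compl.nonempty
  obtain ⟨v, hv⟩ := ((hS.insert u).infinite_compl).nonempty
  simp only [Set.mem_compl_iff, Set.mem_insert_iff, not_or] at hu hv
  have h1 := h u hu
  have h2 := h v hv.2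
  have hP : P = 0 := by
    have hsub : (u - v) • P = 0 := by
      linear_combination (norm := module) h1 - h2
    have huv : u - v ≠ 0 := sub_ne_zero.mpr (fun e => hv.1 e.symm)
    rcases smul_eq_zero.mp hsub with h'|h' <;> tauto
  refine ⟨hP, ?_⟩
  have := h1; rw [hP, smul_zero, zero_add] at this; exact this

lemma col_ne {p : Matrix (Fin n) (Fin 1) ℂ} (hp : p ≠ 0) : ∃ i, p i 0 ≠ 0 := by
  by_contra h
  push_neg at h
  exact hp (by ext i j; have : j = 0 := Subsingleton.elim _ _; subst this; simpa using h i)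

lemma row_ne {q : Matrix (Fin 1) (Fin n) ℂ} (hq : q ≠ 0) : ∃ j, q 0 j ≠ 0 := by
  by_contra h
  push_neg at h
  exact hq (by ext i j; have : i = 0 := Subsingleton.elim _ _; subst this; simpa using h j)

lemma col_prop (u u' : Matrix (Fin n) (Fin 1) ℂ) (v v' : Matrix (Fin 1) (Fin m) ℂ)
    (hv : v ≠ 0) (h : u * v = u' * v') : ∃ t : ℂ, u = t • u' := by
  obtain ⟨j, hj⟩ := row_ne hv
  refine ⟨v' 0 j / v 0 j, ?_⟩
  ext i l
  have hl : l = 0 := Subsingleton.elim _ _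
  subst hl
  have := congrFun (congrFun h i) j
  simp only [Matrix.mul_apply, Fin.sum_univ_one] at this
  rw [Matrix.smul_apply, smul_eq_mul]
  field_simp
  linear_combination this

lemma row_prop (u u' : Matrix (Fin n) (Fin 1) ℂ) (v v' : Matrix (Fin 1) (Fin m) ℂ)
    (hu : u ≠ 0) (h : u * v = u' * v') : ∃ t : ℂ, v = t • v' := by
  obtain ⟨i, hi⟩ := col_ne hu
  refine ⟨u' i 0 / u i 0, ?_⟩
  ext l j
  have hl : l = 0 := Subsingleton.elim _ _
  subst hl
  have := congrFun (congrFun h i) j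
  simp only [Matrix.mul_apply, Fin.sum_univ_one] at this
  rw [Matrix.smul_apply, smul_eq_mul]
  field_simp
  linear_combination this

lemma elem_inv_right (A G : Matrix (Fin n) (Fin n) ℂ) (hAr : A * A⁻¹ = 1)
    (zi ζi z : ℂ) (hz1 : z ≠ zi) (hz2 : z ≠ ζi)
    (hG : G * A⁻¹ * G = (zi - ζi) • G) :
    (A + (z - zi)⁻¹ • G) * (A⁻¹ + (z - ζi)⁻¹ • (-(A⁻¹ * G * A⁻¹))) = 1 := by
  have h1 : z - zi ≠ 0 := sub_ne_zero.mpr hz1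
  have h2 : z - ζi ≠ 0 := sub_ne_zero.mpr hz2
  have e1 : A * (A⁻¹ * G * A⁻¹) = G * A⁻¹ := by
    rw [← Matrix.mul_assoc, ← Matrix.mul_assoc, hAr, Matrix.one_mul]
  have e2 : G * (A⁻¹ * G * A⁻¹) = (zi - ζi) • (G * A⁻¹) := by
    rw [← Matrix.mul_assoc, ← Matrix.mul_assoc, hG, Matrix.smul_mul]
  rw [mul_add, add_mul, add_mul, hAr, Matrix.mul_smul, Matrix.smul_mul, Matrix.mul_smul,
    Matrix.smul_mul, mul_neg, mul_neg, e1, e2]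
  match_scalars <;> field_simp <;> ring

lemma elem_inv_left (A G : Matrix (Fin n) (Fin n) ℂ) (hAl : A⁻¹ * A = 1)
    (zi ζi z : ℂ) (hz1 : z ≠ zi) (hz2 : z ≠ ζi)
    (hG : G * A⁻¹ * G = (zi - ζi) • G) :
    (A⁻¹ + (z - ζi)⁻¹ • (-(A⁻¹ * G * A⁻¹))) * (A + (z - zi)⁻¹ • G) = 1 := by
  have h1 : z - zi ≠ 0 := sub_ne_zero.mpr hz1
  have h2 : z - ζi ≠ 0 := sub_ne_zero.mpr hz2
  have e1 : (A⁻¹ * G * A⁻¹) * A = A⁻¹ * G := by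
    rw [Matrix.mul_assoc, Matrix.mul_assoc, hAl, Matrix.mul_one]
  have e2 : (A⁻¹ * G * A⁻¹) * G = (zi - ζi) • (A⁻¹ * G) := by
    rw [Matrix.mul_assoc, Matrix.mul_assoc, ← Matrix.mul_assoc G, hG, Matrix.mul_smul]
  rw [add_mul, mul_add, mul_add, hAl, Matrix.mul_smul, Matrix.smul_mul, Matrix.mul_smul,
    Matrix.smul_mul, neg_mul, neg_mul, e1, e2]
  match_scalars <;> field_simp <;> ring

lemma refact_res (A' G₂' G₁' G₁'' G₂'' : Matrix (Fin n) (Fin n) ℂ) (w₁ w₂ : ℂ) (hw : w₁ ≠ w₂)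
    (S : Set ℂ) (hS : S.Finite) (hw₁S : w₁ ∈ S) (hw₂S : w₂ ∈ S)
    (h : ∀ z ∉ S, (A' + (z - w₂)⁻¹ • G₂') * (A' + (z - w₁)⁻¹ • G₁') =
      (A' + (z - w₁)⁻¹ • G₁'') * (A' + (z - w₂)⁻¹ • G₂'')) :
    (A' * G₁' + (w₁ - w₂)⁻¹ • (G₂' * G₁') = G₁'' * A' + (w₁ - w₂)⁻¹ • (G₁'' * G₂'')) ∧
    (G₂' * A' + (w₂ - w₁)⁻¹ • (G₂' * G₁') = A' * G₂'' + (w₂ - w₁)⁻¹ • (G₁'' * G₂'')) := by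
  have hw' : w₁ - w₂ ≠ 0 := sub_ne_zero.mpr hw
  have hw'' : w₂ - w₁ ≠ 0 := sub_ne_zero.mpr (Ne.symm hw)
  set P : Matrix (Fin n) (Fin n) ℂ :=
    G₂' * A' + A' * G₁' - G₁'' * A' - A' * G₂'' with hPdef
  set Q : Matrix (Fin n) (Fin n) ℂ :=
    G₂' * G₁' - G₁'' * G₂'' - w₁ • (G₂' * A') - w₂ • (A' * G₁')
      + w₂ • (G₁'' * A') + w₁ • (A' * G₂'') with hQdef
  have hmain : ∀ z ∉ S, z • P + Q = 0 := by
    intro z hz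
    have hz1 : z - w₁ ≠ 0 := sub_ne_zero.mpr (fun e => hz (e ▸ hw₁S))
    have hz2 : z - w₂ ≠ 0 := sub_ne_zero.mpr (fun e => hz (e ▸ hw₂S))
    have hzz := h z hz
    have expand : z • P + Q = ((z - w₁) * (z - w₂)) •
        ((A' + (z - w₂)⁻¹ • G₂') * (A' + (z - w₁)⁻¹ • G₁')
          - (A' + (z - w₁)⁻¹ • G₁'') * (A' + (z - w₂)⁻¹ • G₂'')) := by
      rw [hPdef, hQdef]
      simp only [Matrix.mul_add, Matrix.add_mul, Matrix.smul_mul, Matrix.mul_smul,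
        smul_smul, smul_sub, smul_add]
      match_scalars <;> field_simp <;> ring
    rw [expand, hzz, sub_self, smul_zero]
  obtain ⟨hP, hQ⟩ := two_pt S hS P Q hmain
  constructor
  · have key : (w₁ - w₂) • (A' * G₁' + (w₁ - w₂)⁻¹ • (G₂' * G₁')
        - (G₁'' * A' + (w₁ - w₂)⁻¹ • (G₁'' * G₂''))) = w₁ • P + Q := by
      rw [hPdef, hQdef]
      match_scalars <;> field_simp <;> ring
    rw [hP, hQ, smul_zero, add_zero] at key
    rcases smul_eq_zero.mp key with h'|h'
    · exact absurd h' hw'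
    · exact sub_eq_zero.mp h'
  · have key : (w₂ - w₁) • (G₂' * A' + (w₂ - w₁)⁻¹ • (G₂' * G₁')
        - (A' * G₂'' + (w₂ - w₁)⁻¹ • (G₁'' * G₂''))) = w₂ • P + Q := by
      rw [hPdef, hQdef]
      match_scalars <;> field_simp <;> ring
    rw [hP, hQ, smul_zero, add_zero] at key
    rcases smul_eq_zero.mp key with h'|h'
    · exact absurd h' hw''
    · exact sub_eq_zero.mp h'

end IsoAux

set_option maxHeartbeats 4000000 in
open IsoAux in
theorem isospectral_equations_of_motion
    (r : ℕ) (hr : 1 ≤ r)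
    (A : Matrix (Fin r) (Fin r) ℂ) (hA : IsUnit A.det)
    (z₁ z₂ ζ₁ ζ₂ : ℂ)
    (h12 : z₁ ≠ z₂) (h1a : z₁ ≠ ζ₁) (h1b : z₁ ≠ ζ₂)
    (h2a : z₂ ≠ ζ₁) (h2b : z₂ ≠ ζ₂) (hab : ζ₁ ≠ ζ₂)
    (pu₁ pu₂ p₁ p₂ pt₁ pt₂ : Matrix (Fin r) (Fin 1) ℂ)
    (qu₁ qu₂ q₁ q₂ qt₁ qt₂ : Matrix (Fin 1) (Fin r) ℂ)
    (hpu₁ : pu₁ ≠ 0) (hpu₂ : pu₂ ≠ 0) (hp₁ : p₁ ≠ 0) (hp₂ : p₂ ≠ 0)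
    (hpt₁ : pt₁ ≠ 0) (hpt₂ : pt₂ ≠ 0)
    (hqu₁ : qu₁ ≠ 0) (hqu₂ : qu₂ ≠ 0) (hq₁ : q₁ ≠ 0) (hq₂ : q₂ ≠ 0)
    (hqt₁ : qt₁ ≠ 0) (hqt₂ : qt₂ ≠ 0)
    (hζu₁ : (pu₁ * qu₁ * A⁻¹).trace = z₁ - ζ₁)
    (hζ₁ : (p₁ * q₁ * A⁻¹).trace = z₁ - ζ₁)
    (hζt₁ : (pt₁ * qt₁ * A⁻¹).trace = z₁ - ζ₁)
    (hζu₂ : (pu₂ * qu₂ * A⁻¹).trace = z₂ - ζ₂)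
    (hζ₂ : (p₂ * q₂ * A⁻¹).trace = z₂ - ζ₂)
    (hζt₂ : (pt₂ * qt₂ * A⁻¹).trace = z₂ - ζ₂)
    (hre₁ : ∀ z : ℂ, z ≠ z₁ → z ≠ z₂ →
      (A + (z - z₂)⁻¹ • (pu₂ * qu₂)) * (A + (z - z₁)⁻¹ • (pu₁ * qu₁)) =
      (A + (z - z₁)⁻¹ • (p₁ * q₁)) * (A + (z - z₂)⁻¹ • (p₂ * q₂)))
    (hre₂ : ∀ z : ℂ, z ≠ z₁ → z ≠ z₂ →
      (A + (z - z₂)⁻¹ • (p₂ * q₂)) * (A + (z - z₁)⁻¹ • (p₁ * q₁)) =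
      (A + (z - z₁)⁻¹ • (pt₁ * qt₁)) * (A + (z - z₂)⁻¹ • (pt₂ * qt₂)))
    (hs₁ : (q₂ * p₁) 0 0 ≠ 0)
    (hs₂ : (q₂ * A⁻¹ * pu₁) 0 0 ≠ 0)
    (hs₃ : (q₂ * (A ^ 2)⁻¹ * p₁) 0 0 ≠ 0)
    (hs₄ : (qu₂ * A⁻¹ * p₁) 0 0 ≠ 0) :
    ∃ c c' : ℂ, c ≠ 0 ∧ c' ≠ 0 ∧
      c • pt₁ = A *
        (((z₁ - z₂) * ((q₂ * p₁) 0 0)⁻¹) • p₁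
          + ((z₂ - ζ₁) * ((q₂ * A⁻¹ * pu₁) 0 0)⁻¹) • (A⁻¹ * pu₁)
          + ((ζ₁ - ζ₂) * ((q₂ * (A ^ 2)⁻¹ * p₁) 0 0)⁻¹) • ((A ^ 2)⁻¹ * p₁)) ∧
      c' • qt₂ =
        (((z₂ - z₁) * ((q₂ * p₁) 0 0)⁻¹) • q₂
          + ((z₁ - ζ₂) * ((qu₂ * A⁻¹ * p₁) 0 0)⁻¹) • (qu₂ * A⁻¹)
          + ((ζ₂ - ζ₁) * ((q₂ * (A ^ 2)⁻¹ * p₁) 0 0)⁻¹) • (q₂ * (A ^ 2)⁻¹)) * A := by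
  have hAr : A * A⁻¹ = 1 := Matrix.mul_nonsing_inv A hA
  have hAl : A⁻¹ * A = 1 := Matrix.nonsing_inv_mul A hA
  have hA2 : (A ^ 2)⁻¹ = A⁻¹ * A⁻¹ := by rw [sq, Matrix.mul_inv_rev]
  -- scalar forms of the trace conditions
  have tr1 : (q₁ * A⁻¹ * p₁) 0 0 = z₁ - ζ₁ := by rw [← trace11]; exact hζ₁
  have tr2 : (q₂ * A⁻¹ * p₂) 0 0 = z₂ - ζ₂ := by rw [← trace11]; exact hζ₂
  have tru1 : (qu₁ * A⁻¹ * pu₁) 0 0 = z₁ - ζ₁ := by rw [← trace11]; exact hζu₁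
  have tru2 : (qu₂ * A⁻¹ * pu₂) 0 0 = z₂ - ζ₂ := by rw [← trace11]; exact hζu₂
  -- G A⁻¹ G = (zᵢ - ζᵢ) • G
  have hGgen : ∀ (p : Matrix (Fin r) (Fin 1) ℂ) (q : Matrix (Fin 1) (Fin r) ℂ) (w : ℂ),
      (q * A⁻¹ * p) 0 0 = w → (p * q) * A⁻¹ * (p * q) = w • (p * q) := by
    intro p q w hw
    rw [Matrix.mul_assoc (p*q) A⁻¹ (p*q), ← Matrix.mul_assoc A⁻¹ p q,
      quad' p q (A⁻¹ * p) q, ← Matrix.mul_assoc q A⁻¹ p, hw]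
  have hG1 := hGgen p₁ q₁ (z₁ - ζ₁) tr1
  have hG2 := hGgen p₂ q₂ (z₂ - ζ₂) tr2
  have hGu1 := hGgen pu₁ qu₁ (z₁ - ζ₁) tru1
  have hGu2 := hGgen pu₂ qu₂ (z₂ - ζ₂) tru2
  -- coefficient identities from the second refactorization
  obtain ⟨K1, K2⟩ := refact_res A (p₂ * q₂) (p₁ * q₁) (pt₁ * qt₁) (pt₂ * qt₂) z₁ z₂ h12
    ({z₁, z₂} : Set ℂ) (Set.toFinite _)
    (by simp) (by simp)
    (fun z hz => by
      simp only [Set.mem_insert_iff, Set.mem_singleton_iff, not_or] at hz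
      exact hre₂ z hz.1 hz.2)
  -- inverse refactorization from the first refactorization
  have hinv : ∀ z ∉ ({z₁, z₂, ζ₁, ζ₂} : Set ℂ),
      (A⁻¹ + (z - ζ₂)⁻¹ • (-(A⁻¹ * (p₂ * q₂) * A⁻¹))) *
        (A⁻¹ + (z - ζ₁)⁻¹ • (-(A⁻¹ * (p₁ * q₁) * A⁻¹))) =
      (A⁻¹ + (z - ζ₁)⁻¹ • (-(A⁻¹ * (pu₁ * qu₁) * A⁻¹))) *
        (A⁻¹ + (z - ζ₂)⁻¹ • (-(A⁻¹ * (pu₂ * qu₂) * A⁻¹))) := by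
    intro z hz
    simp only [Set.mem_insert_iff, Set.mem_singleton_iff, not_or] at hz
    obtain ⟨hz₁, hz₂, hzz₁, hzz₂⟩ := hz
    have hb1c1 := elem_inv_right A (p₁ * q₁) hAr z₁ ζ₁ z hz₁ hzz₁ hG1
    have hb2c2 := elem_inv_right A (p₂ * q₂) hAr z₂ ζ₂ z hz₂ hzz₂ hG2
    have hcu1bu1 := elem_inv_left A (pu₁ * qu₁) hAl z₁ ζ₁ z hz₁ hzz₁ hGu1
    have hcu2bu2 := elem_inv_left A (pu₂ * qu₂) hAl z₂ ζ₂ z hz₂ hzz₂ hGu2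
    have hba : ((A⁻¹ + (z - ζ₁)⁻¹ • (-(A⁻¹ * (pu₁ * qu₁) * A⁻¹))) *
        (A⁻¹ + (z - ζ₂)⁻¹ • (-(A⁻¹ * (pu₂ * qu₂) * A⁻¹)))) *
        ((A + (z - z₁)⁻¹ • (p₁ * q₁)) * (A + (z - z₂)⁻¹ • (p₂ * q₂))) = 1 := by
      rw [← hre₁ z hz₁ hz₂]
      calc ((A⁻¹ + (z - ζ₁)⁻¹ • (-(A⁻¹ * (pu₁ * qu₁) * A⁻¹))) *
          (A⁻¹ + (z - ζ₂)⁻¹ • (-(A⁻¹ * (pu₂ * qu₂) * A⁻¹)))) *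
          ((A + (z - z₂)⁻¹ • (pu₂ * qu₂)) * (A + (z - z₁)⁻¹ • (pu₁ * qu₁)))
          = (A⁻¹ + (z - ζ₁)⁻¹ • (-(A⁻¹ * (pu₁ * qu₁) * A⁻¹))) *
            (((A⁻¹ + (z - ζ₂)⁻¹ • (-(A⁻¹ * (pu₂ * qu₂) * A⁻¹))) *
              (A + (z - z₂)⁻¹ • (pu₂ * qu₂))) * (A + (z - z₁)⁻¹ • (pu₁ * qu₁))) := by
            simp only [Matrix.mul_assoc]
        _ = 1 := by rw [hcu2bu2, Matrix.one_mul, hcu1bu1]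
    have hac : ((A + (z - z₁)⁻¹ • (p₁ * q₁)) * (A + (z - z₂)⁻¹ • (p₂ * q₂))) *
        ((A⁻¹ + (z - ζ₂)⁻¹ • (-(A⁻¹ * (p₂ * q₂) * A⁻¹))) *
          (A⁻¹ + (z - ζ₁)⁻¹ • (-(A⁻¹ * (p₁ * q₁) * A⁻¹)))) = 1 := by
      calc ((A + (z - z₁)⁻¹ • (p₁ * q₁)) * (A + (z - z₂)⁻¹ • (p₂ * q₂))) *
          ((A⁻¹ + (z - ζ₂)⁻¹ • (-(A⁻¹ * (p₂ * q₂) * A⁻¹))) *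
            (A⁻¹ + (z - ζ₁)⁻¹ • (-(A⁻¹ * (p₁ * q₁) * A⁻¹))))
          = (A + (z - z₁)⁻¹ • (p₁ * q₁)) *
            (((A + (z - z₂)⁻¹ • (p₂ * q₂)) * (A⁻¹ + (z - ζ₂)⁻¹ • (-(A⁻¹ * (p₂ * q₂) * A⁻¹)))) *
              (A⁻¹ + (z - ζ₁)⁻¹ • (-(A⁻¹ * (p₁ * q₁) * A⁻¹)))) := by
            simp only [Matrix.mul_assoc]
        _ = 1 := by rw [hb2c2, Matrix.one_mul, hb1c1]
    exact (left_inv_eq_right_inv hba hac).symm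
  obtain ⟨K1', K2'⟩ := refact_res A⁻¹ (-(A⁻¹ * (p₂ * q₂) * A⁻¹)) (-(A⁻¹ * (p₁ * q₁) * A⁻¹))
    (-(A⁻¹ * (pu₁ * qu₁) * A⁻¹)) (-(A⁻¹ * (pu₂ * qu₂) * A⁻¹)) ζ₁ ζ₂ hab
    ({z₁, z₂, ζ₁, ζ₂} : Set ℂ) (Set.toFinite _)
    (by simp) (by simp) hinv
  -- ===== preliminary nonvanishing facts =====
  have hzz12 : z₁ - z₂ ≠ 0 := sub_ne_zero.mpr h12
  have hzz21 : z₂ - z₁ ≠ 0 := sub_ne_zero.mpr (Ne.symm h12)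
  have hzab : ζ₁ - ζ₂ ≠ 0 := sub_ne_zero.mpr hab
  have hzba : ζ₂ - ζ₁ ≠ 0 := sub_ne_zero.mpr (Ne.symm hab)
  have hq₁B : q₁ * A⁻¹ ≠ 0 := by
    intro h0
    apply hq₁
    calc q₁ = q₁ * (A⁻¹ * A) := by rw [hAl, Matrix.mul_one]
      _ = (q₁ * A⁻¹) * A := by rw [Matrix.mul_assoc]
      _ = 0 := by rw [h0, Matrix.zero_mul]
  have hp₂B : A⁻¹ * p₂ ≠ 0 := by
    intro h0
    apply hp₂
    calc p₂ = (A * A⁻¹) * p₂ := by rw [hAr, Matrix.one_mul]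
      _ = A * (A⁻¹ * p₂) := by rw [Matrix.mul_assoc]
      _ = 0 := by rw [h0, Matrix.mul_zero]
  have hs3e : (q₂ * A⁻¹ * (A⁻¹ * p₁)) 0 0 = (q₂ * (A ^ 2)⁻¹ * p₁) 0 0 := by
    rw [show q₂ * A⁻¹ * (A⁻¹ * p₁) = q₂ * (A ^ 2)⁻¹ * p₁ from by
      rw [hA2]; simp only [Matrix.mul_assoc]]
  -- ===== p-side : factor K1 =====
  have hfac1 : (A * p₁ + ((z₁ - z₂)⁻¹ * (q₂ * p₁) 0 0) • p₂) * q₁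
      = pt₁ * (qt₁ * A + ((z₁ - z₂)⁻¹ * (qt₁ * pt₂) 0 0) • qt₂) := by
    have l1 : (A * p₁ + ((z₁ - z₂)⁻¹ * (q₂ * p₁) 0 0) • p₂) * q₁
        = A * (p₁ * q₁) + (z₁ - z₂)⁻¹ • ((p₂ * q₂) * (p₁ * q₁)) := by
      rw [Matrix.add_mul, Matrix.smul_mul, Matrix.mul_assoc, quad' p₂ q₂ p₁ q₁, smul_smul]
    have l2 : pt₁ * (qt₁ * A + ((z₁ - z₂)⁻¹ * (qt₁ * pt₂) 0 0) • qt₂)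
        = (pt₁ * qt₁) * A + (z₁ - z₂)⁻¹ • ((pt₁ * qt₁) * (pt₂ * qt₂)) := by
      rw [Matrix.mul_add, Matrix.mul_smul, ← Matrix.mul_assoc, quad' pt₁ qt₁ pt₂ qt₂, smul_smul]
    rw [l1, l2]; exact K1
  obtain ⟨ν, hν⟩ := col_prop (A * p₁ + ((z₁ - z₂)⁻¹ * (q₂ * p₁) 0 0) • p₂) pt₁ q₁
    (qt₁ * A + ((z₁ - z₂)⁻¹ * (qt₁ * pt₂) 0 0) • qt₂) hq₁ hfac1
  have hBfac : (A + (z₁ - z₂)⁻¹ • (p₂ * q₂)) * p₁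
      = A * p₁ + ((z₁ - z₂)⁻¹ * (q₂ * p₁) 0 0) • p₂ := by
    rw [Matrix.add_mul, Matrix.smul_mul, pair_col p₂ q₂ p₁, smul_smul]
  have hune : A * p₁ + ((z₁ - z₂)⁻¹ * (q₂ * p₁) 0 0) • p₂ ≠ 0 := by
    intro h0
    have hcb := elem_inv_left A (p₂ * q₂) hAl z₂ ζ₂ z₁ h12 h1b hG2
    apply hp₁
    calc p₁ = ((A⁻¹ + (z₁ - ζ₂)⁻¹ • (-(A⁻¹ * (p₂ * q₂) * A⁻¹)))
          * (A + (z₁ - z₂)⁻¹ • (p₂ * q₂))) * p₁ := by rw [hcb, Matrix.one_mul]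
      _ = (A⁻¹ + (z₁ - ζ₂)⁻¹ • (-(A⁻¹ * (p₂ * q₂) * A⁻¹)))
          * ((A + (z₁ - z₂)⁻¹ • (p₂ * q₂)) * p₁) := by rw [Matrix.mul_assoc]
      _ = 0 := by rw [hBfac, h0, Matrix.mul_zero]
  have hνne : ν ≠ 0 := fun h0 => hune (by rw [hν, h0, zero_smul])
  -- ===== p-side : factor K1' =====
  have e1 : A⁻¹ * (p₁ * q₁) * A⁻¹ = (A⁻¹ * p₁) * (q₁ * A⁻¹) := by simp only [Matrix.mul_assoc]
  have e2 : A⁻¹ * (p₂ * q₂) * A⁻¹ = (A⁻¹ * p₂) * (q₂ * A⁻¹) := by simp only [Matrix.mul_assoc]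
  have eu1 : A⁻¹ * (pu₁ * qu₁) * A⁻¹ = (A⁻¹ * pu₁) * (qu₁ * A⁻¹) := by simp only [Matrix.mul_assoc]
  have eu2 : A⁻¹ * (pu₂ * qu₂) * A⁻¹ = (A⁻¹ * pu₂) * (qu₂ * A⁻¹) := by simp only [Matrix.mul_assoc]
  rw [e1, e2, eu1, eu2] at K1' K2'
  simp only [Matrix.neg_mul, Matrix.mul_neg, neg_neg, smul_neg] at K1' K2'
  rw [quad' (A⁻¹ * p₂) (q₂ * A⁻¹) (A⁻¹ * p₁) (q₁ * A⁻¹),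
    quad' (A⁻¹ * pu₁) (qu₁ * A⁻¹) (A⁻¹ * pu₂) (qu₂ * A⁻¹),
    smul_smul, smul_smul, hs3e] at K1'
  rw [quad' (A⁻¹ * p₂) (q₂ * A⁻¹) (A⁻¹ * p₁) (q₁ * A⁻¹),
    quad' (A⁻¹ * pu₁) (qu₁ * A⁻¹) (A⁻¹ * pu₂) (qu₂ * A⁻¹),
    smul_smul, smul_smul, hs3e] at K2'
  have hfac2 : (-(A⁻¹ * (A⁻¹ * p₁)) + ((ζ₁ - ζ₂)⁻¹ * (q₂ * (A ^ 2)⁻¹ * p₁) 0 0) • (A⁻¹ * p₂))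
        * (q₁ * A⁻¹)
      = (A⁻¹ * pu₁) * (-(qu₁ * A⁻¹ * A⁻¹)
        + ((ζ₁ - ζ₂)⁻¹ * (qu₁ * A⁻¹ * (A⁻¹ * pu₂)) 0 0) • (qu₂ * A⁻¹)) := by
    have l1 : (-(A⁻¹ * (A⁻¹ * p₁)) + ((ζ₁ - ζ₂)⁻¹ * (q₂ * (A ^ 2)⁻¹ * p₁) 0 0) • (A⁻¹ * p₂))
          * (q₁ * A⁻¹)
        = -(A⁻¹ * ((A⁻¹ * p₁) * (q₁ * A⁻¹)))
          + ((ζ₁ - ζ₂)⁻¹ * (q₂ * (A ^ 2)⁻¹ * p₁) 0 0) • ((A⁻¹ * p₂) * (q₁ * A⁻¹)) := by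
      rw [Matrix.add_mul, Matrix.neg_mul, Matrix.smul_mul, Matrix.mul_assoc]
    have l2 : (A⁻¹ * pu₁) * (-(qu₁ * A⁻¹ * A⁻¹)
          + ((ζ₁ - ζ₂)⁻¹ * (qu₁ * A⁻¹ * (A⁻¹ * pu₂)) 0 0) • (qu₂ * A⁻¹))
        = -((A⁻¹ * pu₁) * (qu₁ * A⁻¹) * A⁻¹)
          + ((ζ₁ - ζ₂)⁻¹ * (qu₁ * A⁻¹ * (A⁻¹ * pu₂)) 0 0) • ((A⁻¹ * pu₁) * (qu₂ * A⁻¹)) := by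
      rw [Matrix.mul_add, Matrix.mul_neg, Matrix.mul_smul, ← Matrix.mul_assoc]
    rw [l1, l2]; exact K1'
  obtain ⟨t, ht⟩ := col_prop _ (A⁻¹ * pu₁) (q₁ * A⁻¹) _ hq₁B hfac2
  have hp2A : -(A⁻¹ * p₁) + ((ζ₁ - ζ₂)⁻¹ * (q₂ * (A ^ 2)⁻¹ * p₁) 0 0) • p₂ = t • pu₁ := by
    have h' := congrArg (fun M => A * M) ht
    simp only [Matrix.mul_add, Matrix.mul_neg, Matrix.mul_smul, ← Matrix.mul_assoc,
      hAr, Matrix.one_mul] at h'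
    exact h'
  have hscal : -((q₂ * (A ^ 2)⁻¹ * p₁) 0 0)
      + (ζ₁ - ζ₂)⁻¹ * (q₂ * (A ^ 2)⁻¹ * p₁) 0 0 * (z₂ - ζ₂)
      = t * (q₂ * A⁻¹ * pu₁) 0 0 := by
    have e := congrArg (fun M => ((q₂ * A⁻¹) * M) 0 0) hp2A
    simp only [Matrix.mul_add, Matrix.mul_neg, Matrix.mul_smul, Matrix.add_apply,
      Matrix.neg_apply, Matrix.smul_apply, smul_eq_mul] at e
    rw [hs3e, tr2] at e
    convert e using 2 <;> ring
  have hp₂val : p₂ = ((ζ₁ - ζ₂) * ((q₂ * (A ^ 2)⁻¹ * p₁) 0 0)⁻¹) • (A⁻¹ * p₁)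
      + ((z₂ - ζ₁) * ((q₂ * A⁻¹ * pu₁) 0 0)⁻¹) • pu₁ := by
    have hccne : (ζ₁ - ζ₂)⁻¹ * (q₂ * (A ^ 2)⁻¹ * p₁) 0 0 ≠ 0 :=
      mul_ne_zero (inv_ne_zero hzab) hs₃
    have h1 : ((ζ₁ - ζ₂)⁻¹ * (q₂ * (A ^ 2)⁻¹ * p₁) 0 0) • p₂ = A⁻¹ * p₁ + t • pu₁ := by
      linear_combination (norm := module) hp2A
    have h2 : p₂ = (((ζ₁ - ζ₂)⁻¹ * (q₂ * (A ^ 2)⁻¹ * p₁) 0 0)⁻¹) • (A⁻¹ * p₁ + t • pu₁) := by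
      rw [← h1, smul_smul, inv_mul_cancel₀ hccne, one_smul]
    have c1gen : ∀ x : ℂ, x ≠ 0 → ((ζ₁ - ζ₂)⁻¹ * x)⁻¹ = (ζ₁ - ζ₂) * x⁻¹ := by
      intro x hx; field_simp
    have c2gen : ∀ a b u : ℂ, a ≠ 0 → b ≠ 0 →
        (-a + (ζ₁ - ζ₂)⁻¹ * a * (z₂ - ζ₂) = u * b) →
        (ζ₁ - ζ₂) * a⁻¹ * u = (z₂ - ζ₁) * b⁻¹ := by
      intro a b u ha hb hval
      field_simp at hval ⊢
      linear_combination -hval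
    have c1 := c1gen _ hs₃
    have c2 := c2gen _ _ t hs₃ hs₂ hscal
    rw [h2]
    rw [smul_add]
    rw [smul_smul]
    rw [c1]
    rw [c2]
  -- ===== q-side : factor K2 =====
  have hfac3 : p₂ * (q₂ * A + ((z₂ - z₁)⁻¹ * (q₂ * p₁) 0 0) • q₁)
      = (A * pt₂ + ((z₂ - z₁)⁻¹ * (qt₁ * pt₂) 0 0) • pt₁) * qt₂ := by
    have l1 : p₂ * (q₂ * A + ((z₂ - z₁)⁻¹ * (q₂ * p₁) 0 0) • q₁)
        = (p₂ * q₂) * A + (z₂ - z₁)⁻¹ • ((p₂ * q₂) * (p₁ * q₁)) := by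
      rw [Matrix.mul_add, Matrix.mul_smul, ← Matrix.mul_assoc, quad' p₂ q₂ p₁ q₁, smul_smul]
    have l2 : (A * pt₂ + ((z₂ - z₁)⁻¹ * (qt₁ * pt₂) 0 0) • pt₁) * qt₂
        = A * (pt₂ * qt₂) + (z₂ - z₁)⁻¹ • ((pt₁ * qt₁) * (pt₂ * qt₂)) := by
      rw [Matrix.add_mul, Matrix.smul_mul, Matrix.mul_assoc, quad' pt₁ qt₁ pt₂ qt₂, smul_smul]
    rw [l1, l2]; exact K2
  obtain ⟨ν', hν'⟩ := row_prop p₂ (A * pt₂ + ((z₂ - z₁)⁻¹ * (qt₁ * pt₂) 0 0) • pt₁)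
    (q₂ * A + ((z₂ - z₁)⁻¹ * (q₂ * p₁) 0 0) • q₁) qt₂ hp₂ hfac3
  have hBfac' : q₂ * (A + (z₂ - z₁)⁻¹ • (p₁ * q₁))
      = q₂ * A + ((z₂ - z₁)⁻¹ * (q₂ * p₁) 0 0) • q₁ := by
    rw [Matrix.mul_add, Matrix.mul_smul, pair_row q₂ p₁ q₁, smul_smul]
  have hune' : q₂ * A + ((z₂ - z₁)⁻¹ * (q₂ * p₁) 0 0) • q₁ ≠ 0 := by
    intro h0
    have hbc := elem_inv_right A (p₁ * q₁) hAr z₁ ζ₁ z₂ (Ne.symm h12) h2a hG1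
    apply hq₂
    calc q₂ = q₂ * ((A + (z₂ - z₁)⁻¹ • (p₁ * q₁))
          * (A⁻¹ + (z₂ - ζ₁)⁻¹ • (-(A⁻¹ * (p₁ * q₁) * A⁻¹)))) := by rw [hbc, Matrix.mul_one]
      _ = (q₂ * (A + (z₂ - z₁)⁻¹ • (p₁ * q₁)))
          * (A⁻¹ + (z₂ - ζ₁)⁻¹ • (-(A⁻¹ * (p₁ * q₁) * A⁻¹))) := (Matrix.mul_assoc _ _ _).symm
      _ = 0 := by rw [hBfac', h0, Matrix.zero_mul]
  have hν'ne : ν' ≠ 0 := fun h0 => hune' (by rw [hν', h0, zero_smul])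
  -- ===== q-side : factor K2' =====
  have hfac4 : (A⁻¹ * p₂) * (-(q₂ * A⁻¹ * A⁻¹)
        + ((ζ₂ - ζ₁)⁻¹ * (q₂ * (A ^ 2)⁻¹ * p₁) 0 0) • (q₁ * A⁻¹))
      = (-(A⁻¹ * (A⁻¹ * pu₂))
        + ((ζ₂ - ζ₁)⁻¹ * (qu₁ * A⁻¹ * (A⁻¹ * pu₂)) 0 0) • (A⁻¹ * pu₁)) * (qu₂ * A⁻¹) := by
    have l1 : (A⁻¹ * p₂) * (-(q₂ * A⁻¹ * A⁻¹)
          + ((ζ₂ - ζ₁)⁻¹ * (q₂ * (A ^ 2)⁻¹ * p₁) 0 0) • (q₁ * A⁻¹))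
        = -((A⁻¹ * p₂) * (q₂ * A⁻¹) * A⁻¹)
          + ((ζ₂ - ζ₁)⁻¹ * (q₂ * (A ^ 2)⁻¹ * p₁) 0 0) • ((A⁻¹ * p₂) * (q₁ * A⁻¹)) := by
      rw [Matrix.mul_add, Matrix.mul_neg, Matrix.mul_smul, ← Matrix.mul_assoc]
    have l2 : (-(A⁻¹ * (A⁻¹ * pu₂))
          + ((ζ₂ - ζ₁)⁻¹ * (qu₁ * A⁻¹ * (A⁻¹ * pu₂)) 0 0) • (A⁻¹ * pu₁)) * (qu₂ * A⁻¹)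
        = -(A⁻¹ * ((A⁻¹ * pu₂) * (qu₂ * A⁻¹)))
          + ((ζ₂ - ζ₁)⁻¹ * (qu₁ * A⁻¹ * (A⁻¹ * pu₂)) 0 0) • ((A⁻¹ * pu₁) * (qu₂ * A⁻¹)) := by
      rw [Matrix.add_mul, Matrix.neg_mul, Matrix.smul_mul, Matrix.mul_assoc]
    rw [l1, l2]; exact K2'
  obtain ⟨t', ht'⟩ := row_prop (A⁻¹ * p₂) _ _ (qu₂ * A⁻¹) hp₂B hfac4
  have hq1A : -(q₂ * A⁻¹) + ((ζ₂ - ζ₁)⁻¹ * (q₂ * (A ^ 2)⁻¹ * p₁) 0 0) • q₁ = t' • qu₂ := by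
    have h' := congrArg (fun M => M * A) ht'
    simp only [Matrix.add_mul, Matrix.neg_mul, Matrix.smul_mul, Matrix.mul_assoc,
      hAl, Matrix.mul_one] at h'
    rw [show (q₂ * ((A ^ 2)⁻¹ * p₁)) 0 0 = (q₂ * (A ^ 2)⁻¹ * p₁) 0 0 from by
      rw [← Matrix.mul_assoc]] at h'
    exact h'
  have hscal' : -((q₂ * (A ^ 2)⁻¹ * p₁) 0 0)
      + (ζ₂ - ζ₁)⁻¹ * (q₂ * (A ^ 2)⁻¹ * p₁) 0 0 * (z₁ - ζ₁)
      = t' * (qu₂ * A⁻¹ * p₁) 0 0 := by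
    have e := congrArg (fun M => (M * (A⁻¹ * p₁)) 0 0) hq1A
    simp only [Matrix.add_mul, Matrix.neg_mul, Matrix.smul_mul, Matrix.add_apply,
      Matrix.neg_apply, Matrix.smul_apply, smul_eq_mul] at e
    have hq1e : (q₁ * (A⁻¹ * p₁)) 0 0 = z₁ - ζ₁ := by rw [← Matrix.mul_assoc]; exact tr1
    have hq4e : (qu₂ * (A⁻¹ * p₁)) 0 0 = (qu₂ * A⁻¹ * p₁) 0 0 := by rw [← Matrix.mul_assoc]
    rw [hs3e, hq1e, hq4e] at e
    linear_combination e
  have hq₁val : q₁ = ((ζ₂ - ζ₁) * ((q₂ * (A ^ 2)⁻¹ * p₁) 0 0)⁻¹) • (q₂ * A⁻¹)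
      + ((z₁ - ζ₂) * ((qu₂ * A⁻¹ * p₁) 0 0)⁻¹) • qu₂ := by
    have hccne : (ζ₂ - ζ₁)⁻¹ * (q₂ * (A ^ 2)⁻¹ * p₁) 0 0 ≠ 0 :=
      mul_ne_zero (inv_ne_zero hzba) hs₃
    have h1 : ((ζ₂ - ζ₁)⁻¹ * (q₂ * (A ^ 2)⁻¹ * p₁) 0 0) • q₁ = q₂ * A⁻¹ + t' • qu₂ := by
      linear_combination (norm := module) hq1A
    have h2 : q₁ = (((ζ₂ - ζ₁)⁻¹ * (q₂ * (A ^ 2)⁻¹ * p₁) 0 0)⁻¹) • (q₂ * A⁻¹ + t' • qu₂) := by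
      rw [← h1, smul_smul, inv_mul_cancel₀ hccne, one_smul]
    have c1gen' : ∀ x : ℂ, x ≠ 0 → ((ζ₂ - ζ₁)⁻¹ * x)⁻¹ = (ζ₂ - ζ₁) * x⁻¹ := by
      intro x hx; field_simp
    have c2gen' : ∀ a b u : ℂ, a ≠ 0 → b ≠ 0 →
        (-a + (ζ₂ - ζ₁)⁻¹ * a * (z₁ - ζ₁) = u * b) →
        (ζ₂ - ζ₁) * a⁻¹ * u = (z₁ - ζ₂) * b⁻¹ := by
      intro a b u ha hb hval
      field_simp at hval ⊢
      linear_combination -hval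
    rw [h2, smul_add, smul_smul, c1gen' _ hs₃, c2gen' _ _ t' hs₃ hs₄ hscal']
  -- ===== final assembly =====
  have kgen : ∀ x : ℂ, x ≠ 0 → (z₁ - z₂) * x⁻¹ * ((z₁ - z₂)⁻¹ * x) = 1 := by
    intro x hx; field_simp
  have kgen' : ∀ x : ℂ, x ≠ 0 → (z₂ - z₁) * x⁻¹ * ((z₂ - z₁)⁻¹ * x) = 1 := by
    intro x hx; field_simp
  refine ⟨((z₁ - z₂) * ((q₂ * p₁) 0 0)⁻¹) * ν, ((z₂ - z₁) * ((q₂ * p₁) 0 0)⁻¹) * ν',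
    mul_ne_zero (mul_ne_zero hzz12 (inv_ne_zero hs₁)) hνne,
    mul_ne_zero (mul_ne_zero hzz21 (inv_ne_zero hs₁)) hν'ne, ?_, ?_⟩
  · have hred1 : A * (A⁻¹ * pu₁) = pu₁ := by rw [← Matrix.mul_assoc, hAr, Matrix.one_mul]
    have hred2 : A * ((A ^ 2)⁻¹ * p₁) = A⁻¹ * p₁ := by
      rw [hA2, Matrix.mul_assoc A⁻¹ A⁻¹ p₁, ← Matrix.mul_assoc A A⁻¹ (A⁻¹ * p₁), hAr,
        Matrix.one_mul]
    calc (((z₁ - z₂) * ((q₂ * p₁) 0 0)⁻¹) * ν) • pt₁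
        = ((z₁ - z₂) * ((q₂ * p₁) 0 0)⁻¹) • (ν • pt₁) := by rw [smul_smul]
      _ = ((z₁ - z₂) * ((q₂ * p₁) 0 0)⁻¹) • (A * p₁ + ((z₁ - z₂)⁻¹ * (q₂ * p₁) 0 0) • p₂) := by
          rw [← hν]
      _ = ((z₁ - z₂) * ((q₂ * p₁) 0 0)⁻¹) • (A * p₁) + p₂ := by
          rw [smul_add, smul_smul, kgen _ hs₁, one_smul]
      _ = A * (((z₁ - z₂) * ((q₂ * p₁) 0 0)⁻¹) • p₁
          + ((z₂ - ζ₁) * ((q₂ * A⁻¹ * pu₁) 0 0)⁻¹) • (A⁻¹ * pu₁)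
          + ((ζ₁ - ζ₂) * ((q₂ * (A ^ 2)⁻¹ * p₁) 0 0)⁻¹) • ((A ^ 2)⁻¹ * p₁)) := by
          rw [hp₂val, Matrix.mul_add, Matrix.mul_add, Matrix.mul_smul, Matrix.mul_smul,
            Matrix.mul_smul, hred1, hred2]
          module
  · have hred3 : (qu₂ * A⁻¹) * A = qu₂ := by rw [Matrix.mul_assoc, hAl, Matrix.mul_one]
    have hred4 : (q₂ * (A ^ 2)⁻¹) * A = q₂ * A⁻¹ := by
      rw [hA2, ← Matrix.mul_assoc, Matrix.mul_assoc (q₂ * A⁻¹) A⁻¹ A, hAl, Matrix.mul_one]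
    calc (((z₂ - z₁) * ((q₂ * p₁) 0 0)⁻¹) * ν') • qt₂
        = ((z₂ - z₁) * ((q₂ * p₁) 0 0)⁻¹) • (ν' • qt₂) := by rw [smul_smul]
      _ = ((z₂ - z₁) * ((q₂ * p₁) 0 0)⁻¹) • (q₂ * A + ((z₂ - z₁)⁻¹ * (q₂ * p₁) 0 0) • q₁) := by
          rw [← hν']
      _ = ((z₂ - z₁) * ((q₂ * p₁) 0 0)⁻¹) • (q₂ * A) + q₁ := by
          rw [smul_add, smul_smul, kgen' _ hs₁, one_smul]
      _ = (((z₂ - z₁) * ((q₂ * p₁) 0 0)⁻¹) • q₂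
          + ((z₁ - ζ₂) * ((qu₂ * A⁻¹ * p₁) 0 0)⁻¹) • (qu₂ * A⁻¹)
          + ((ζ₂ - ζ₁) * ((q₂ * (A ^ 2)⁻¹ * p₁) 0 0)⁻¹) • (q₂ * (A ^ 2)⁻¹)) * A := by
          rw [hq₁val, Matrix.add_mul, Matrix.add_mul, Matrix.smul_mul, Matrix.smul_mul,
            Matrix.smul_mul, hred3, hred4]
          module
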